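/- Let c₁,…,c_r > 0 and p ≥ 1. The infimum of α ↦ ∑ᵢ c_i^{1/(2p+1)} α_i^{2 − 1/(2p+1)} over the probability simplex is achieved at α_i* = c_i^{−1/(2p)} / ∑_j c_j^{−1/(2p)}, and the minimum value equals (∑_j c_j^{−1/(2p)})^{1/(2p+1) − 1}. -/

import Mathlib

/-- For c₁,…,c_r > 0 and p ≥ 1, the infimum of ∑ᵢ cᵢ^{1/(2p+1)} αᵢ^{2−1/(2p+1)} over
the probability simplex is achieved at αᵢ* = cᵢ^{−1/(2p)}/∑ⱼ cⱼ^{−1/(2p)}, with minimal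
value (∑ⱼ cⱼ^{−1/(2p)})^{1/(2p+1)−1}. -/
theorem stmt16 (r : ℕ) (hr : 0 < r) (c : Fin r → ℝ) (hc : ∀ i, 0 < c i)
    (p : ℕ) (hp : 1 ≤ p) :
    (∀ i, 0 ≤ c i ^ (-(1 : ℝ) / (2 * p)) / ∑ j, c j ^ (-(1 : ℝ) / (2 * p))) ∧
    (∑ i, c i ^ (-(1 : ℝ) / (2 * p)) / ∑ j, c j ^ (-(1 : ℝ) / (2 * p))) = 1 ∧
    (∑ i, c i ^ ((1 : ℝ) / (2 * p + 1)) *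
        (c i ^ (-(1 : ℝ) / (2 * p)) / ∑ j, c j ^ (-(1 : ℝ) / (2 * p)))
          ^ (2 - (1 : ℝ) / (2 * p + 1)))
      = (∑ j, c j ^ (-(1 : ℝ) / (2 * p))) ^ ((1 : ℝ) / (2 * p + 1) - 1) ∧
    ∀ α : Fin r → ℝ, (∀ i, 0 ≤ α i) → (∑ i, α i = 1) →
      (∑ j, c j ^ (-(1 : ℝ) / (2 * p))) ^ ((1 : ℝ) / (2 * p + 1) - 1) ≤
        ∑ i, c i ^ ((1 : ℝ) / (2 * p + 1)) * α i ^ (2 - (1 : ℝ) / (2 * p + 1)) := by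
  have hp1 : (1 : ℝ) ≤ (p : ℝ) := by exact_mod_cast hp
  have hq : (0 : ℝ) < 2 * (p : ℝ) := by linarith
  have hq1 : (0 : ℝ) < 2 * (p : ℝ) + 1 := by linarith
  set t : ℝ := (1 : ℝ) / (2 * (p : ℝ) + 1) with htdef
  have ht : 0 < t := by positivity
  have ht1 : t < 1 := by
    rw [htdef, div_lt_one hq1]; linarith
  have h2t : (0 : ℝ) < 2 - t := by linarith
  have h1t : (0 : ℝ) < 1 - t := by linarith
  have hkey : t * (2 * (p : ℝ) + 1) = 1 := by
    rw [htdef]; field_simp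
  set S : ℝ := ∑ j, c j ^ (-(1 : ℝ) / (2 * (p : ℝ))) with hSdef
  have hS : 0 < S := by
    rw [hSdef]
    apply Finset.sum_pos (fun i _ => Real.rpow_pos_of_pos (hc i) _)
    exact Finset.univ_nonempty_iff.mpr (Fin.pos_iff_nonempty.mp hr)
  refine ⟨fun i => div_nonneg (Real.rpow_nonneg (hc i).le _) hS.le, ?_, ?_, ?_⟩
  · rw [← Finset.sum_div, ← hSdef, div_self hS.ne']
  · -- value at the optimum
    have he : ∀ i : Fin r,
        c i ^ t * (c i ^ (-(1 : ℝ) / (2 * (p : ℝ))) / S) ^ (2 - t)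
          = c i ^ (-(1 : ℝ) / (2 * (p : ℝ))) / S ^ (2 - t) := by
      intro i
      rw [Real.div_rpow (Real.rpow_nonneg (hc i).le _) hS.le,
        ← Real.rpow_mul (hc i).le, mul_div_assoc', ← Real.rpow_add (hc i)]
      congr 2
      have h2p : (2 * (p : ℝ)) ≠ 0 := hq.ne'
      field_simp
      nlinarith [hkey]
    calc ∑ i, c i ^ t * (c i ^ (-(1 : ℝ) / (2 * (p : ℝ))) / S) ^ (2 - t)
        = ∑ i, c i ^ (-(1 : ℝ) / (2 * (p : ℝ))) / S ^ (2 - t) := by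
          exact Finset.sum_congr rfl fun i _ => he i
      _ = S / S ^ (2 - t) := by rw [← Finset.sum_div, ← hSdef]
      _ = S ^ (t - 1) := by
          have h4 : S ^ (t - 1) = S / S ^ (2 - t) := by
            rw [show (t - 1 : ℝ) = 1 - (2 - t) by ring,
              Real.rpow_sub hS 1 (2 - t), Real.rpow_one]
          rw [h4]
  · -- the lower bound over the simplex
    intro α hα hsum
    set F : ℝ := ∑ i, c i ^ t * α i ^ (2 - t) with hFdef
    have hF0 : (0 : ℝ) ≤ F := by
      apply Finset.sum_nonneg
      exact fun i _ => mul_nonneg (Real.rpow_nonneg (hc i).le _)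
        (Real.rpow_nonneg (hα i) _)
    have hPQ : Real.HolderConjugate (2 - t) ((2 - t) / (1 - t)) := by
      rw [Real.holderConjugate_iff]
      constructor
      · linarith
      · rw [inv_div, inv_eq_one_div, ← add_div, div_eq_one_iff_eq h2t.ne']
        ring
    have holder := Real.inner_le_Lp_mul_Lq_of_nonneg (s := Finset.univ)
      (f := fun i => c i ^ (t / (2 - t)) * α i)
      (g := fun i => c i ^ (-(1 - t) / (2 * (p : ℝ) * (2 - t)))) hPQ
      (fun i _ => mul_nonneg (Real.rpow_nonneg (hc i).le _) (hα i))
      (fun i _ => Real.rpow_nonneg (hc i).le _)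
    have hfg : ∀ i : Fin r,
        (c i ^ (t / (2 - t)) * α i) * c i ^ (-(1 - t) / (2 * (p : ℝ) * (2 - t))) = α i := by
      intro i
      rw [mul_comm (c i ^ (t / (2 - t))) (α i), mul_assoc, ← Real.rpow_add (hc i)]
      have : t / (2 - t) + -(1 - t) / (2 * (p : ℝ) * (2 - t)) = 0 := by
        field_simp
        nlinarith [hkey]
      rw [this, Real.rpow_zero, mul_one]
    have hfP : ∀ i : Fin r,
        (c i ^ (t / (2 - t)) * α i) ^ (2 - t) = c i ^ t * α i ^ (2 - t) := by
      intro i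
      rw [Real.mul_rpow (Real.rpow_nonneg (hc i).le _) (hα i),
        ← Real.rpow_mul (hc i).le, div_mul_cancel₀ _ h2t.ne']
    have hgQ : ∀ i : Fin r,
        (c i ^ (-(1 - t) / (2 * (p : ℝ) * (2 - t)))) ^ ((2 - t) / (1 - t))
          = c i ^ (-(1 : ℝ) / (2 * (p : ℝ))) := by
      intro i
      rw [← Real.rpow_mul (hc i).le]
      congr 1
      field_simp
    rw [Finset.sum_congr rfl (fun i _ => hfg i),
      Finset.sum_congr rfl (fun i _ => hfP i),
      Finset.sum_congr rfl (fun i _ => hgQ i), hsum, ← hFdef, ← hSdef] at holder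
    have hQexp : (1 : ℝ) / ((2 - t) / (1 - t)) = (1 - t) / (2 - t) := by
      field_simp
    rw [hQexp] at holder
    -- from `1 ≤ F^(1/(2-t)) * S^((1-t)/(2-t))` deduce `S^(t-1) ≤ F`
    have h2 : S ^ (-((1 - t) / (2 - t))) ≤ F ^ ((1 : ℝ) / (2 - t)) := by
      rw [Real.rpow_neg hS.le, inv_eq_one_div,
        div_le_iff₀ (Real.rpow_pos_of_pos hS _)]
      exact holder
    have h3 := Real.rpow_le_rpow (Real.rpow_nonneg hS.le _) h2 h2t.le
    rw [← Real.rpow_mul hS.le, ← Real.rpow_mul hF0] at h3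
    have e1 : -((1 - t) / (2 - t)) * (2 - t) = t - 1 := by
      field_simp
      ring
    have e2 : (1 : ℝ) / (2 - t) * (2 - t) = 1 := by
      field_simp
    rw [e1, e2, Real.rpow_one] at h3
    exact h3
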